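/- arXiv:1701.06656 — 2 statements merged into one kernel-verified Lean document; each statement's English description precedes it below -/
import Mathlib

section
/- Let Φ₀ : ℝ → ℝ^L be a twice continuously differentiable solution of Φ₀''(z) = ∇Ψ(Φ₀(z)) - (1/L)(1 · ∇Ψ(Φ₀(z))) 1 with Φ₀'(z) ∈ TG for all z, such that Ψ(Φ₀(z)) → 0 and |Φ₀'(z)| → 0 as z → -∞. Then the equipartition of energy Ψ(Φ₀(z)) = ½|Φ₀'(z)|² holds for all z ∈ ℝ. -/
open Finset Filter

theorem equipartition_of_energy
    (L : ℕ) (hL : 2 ≤ L)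
    (Ψ : (Fin L → ℝ) → ℝ) (hΨ : ContDiff ℝ 1 Ψ) (hΨnn : ∀ x, 0 ≤ Ψ x)
    (Φ Φ' Φ'' : ℝ → Fin L → ℝ)
    (hΦ : ∀ z i, HasDerivAt (fun t => Φ t i) (Φ' z i) z)
    (hΦ' : ∀ z i, HasDerivAt (fun t => Φ' t i) (Φ'' z i) z)
    (hODE : ∀ z i, Φ'' z i
      = fderiv ℝ Ψ (Φ z) (Pi.single i 1)
        - (1 / (L : ℝ)) * ∑ j, fderiv ℝ Ψ (Φ z) (Pi.single j 1))
    (hTG : ∀ z, (∑ i, Φ' z i) = 0)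
    (hdecay1 : Tendsto (fun z => Ψ (Φ z)) atBot (nhds 0))
    (hdecay2 : Tendsto (fun z => ∑ i, (Φ' z i) ^ 2) atBot (nhds 0)) :
    ∀ z, Ψ (Φ z) = (1 / 2) * ∑ i, (Φ' z i) ^ 2 := by
  set g : ℝ → ℝ := fun z => Ψ (Φ z) - (1 / 2) * ∑ i, (Φ' z i) ^ 2 with hg
  have hgderiv : ∀ z, HasDerivAt g 0 z := by
    intro z
    have hΦfull : HasDerivAt Φ (Φ' z) z := hasDerivAt_pi.mpr (fun i => hΦ z i)
    have h1 : HasDerivAt (fun t => Ψ (Φ t)) (fderiv ℝ Ψ (Φ z) (Φ' z)) z :=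
      (hΨ.differentiable one_ne_zero (Φ z)).hasFDerivAt.comp_hasDerivAt z hΦfull
    have h2 : HasDerivAt (fun t => (1 / 2 : ℝ) * ∑ i, (Φ' t i) ^ 2)
        ((1 / 2) * ∑ i, 2 * Φ' z i * Φ'' z i) z := by
      refine HasDerivAt.const_mul _ ?_
      refine HasDerivAt.fun_sum (fun i _ => ?_)
      have := (hΦ' z i).fun_pow 2
      simpa [mul_comm, mul_assoc, mul_left_comm] using this
    have hS : ∑ i, Φ' z i * Φ'' z i
        = ∑ i, Φ' z i * fderiv ℝ Ψ (Φ z) (Pi.single i 1) := by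
      have h : ∀ i ∈ Finset.univ, Φ' z i * Φ'' z i
          = Φ' z i * fderiv ℝ Ψ (Φ z) (Pi.single i 1)
            - Φ' z i * ((1 / (L : ℝ)) * ∑ j, fderiv ℝ Ψ (Φ z) (Pi.single j 1)) := by
        intro i _
        rw [hODE z i]; ring
      rw [Finset.sum_congr rfl h, Finset.sum_sub_distrib, ← Finset.sum_mul, hTG z]
      simp
    have key : fderiv ℝ Ψ (Φ z) (Φ' z) = (1 / 2) * ∑ i, 2 * Φ' z i * Φ'' z i := by
      have hexp : (Φ' z : Fin L → ℝ)
          = ∑ i, Φ' z i • (Pi.single i 1 : Fin L → ℝ) := by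
        ext j
        simp [Finset.sum_apply, Pi.single_apply, mul_comm]
      calc fderiv ℝ Ψ (Φ z) (Φ' z)
          = ∑ i, Φ' z i * fderiv ℝ Ψ (Φ z) (Pi.single i 1) := by
            conv_lhs => rw [hexp]
            rw [map_sum]
            simp [smul_eq_mul]
        _ = (1 / 2) * ∑ i, 2 * Φ' z i * Φ'' z i := by
            rw [← hS, Finset.mul_sum]
            exact Finset.sum_congr rfl fun i _ => by ring
    have hsub := h1.sub h2
    rw [key, sub_self] at hsub
    exact hsub
  have hconst : ∀ z, g z = g 0 := fun z =>
    is_const_of_deriv_eq_zero (fun t => (hgderiv t).differentiableAt)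
      (fun t => (hgderiv t).deriv) z 0
  have hlim : Tendsto g atBot (nhds 0) := by
    have h := hdecay1.sub (hdecay2.const_mul (1 / 2 : ℝ))
    have h0 : (0 : ℝ) - 1 / 2 * 0 = 0 := by ring
    rw [h0] at h
    exact h
  have hg0 : g 0 = 0 := by
    have h : Tendsto (fun _ : ℝ => g 0) atBot (nhds 0) :=
      hlim.congr fun z => hconst z
    exact tendsto_nhds_unique tendsto_const_nhds h
  intro z
  have h := hconst z
  rw [hg0] at h
  simp only [hg] at h
  linarith
end

section
/- Let φ : ℝ → ℝ be a monotone increasing C² solution of -φ'' + W̃'(φ) = 0 with φ(±∞) = ±1 and W̃(φ(z)) → 0, φ'(z) → 0 as z → -∞, where W̃ ≥ 0 with W̃(±1)=0. Then ∫_{-∞}^{∞} (W̃(φ) + ½(φ')²) dz = ∫_{-1}^{1} √(2 W̃(s)) ds. -/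
open Filter

theorem heteroclinic_energy_eq_surface_tension
    (W : ℝ → ℝ) (hW : ContDiff ℝ 1 W) (hWnn : ∀ s, 0 ≤ W s)
    (hW1 : W 1 = 0) (hWneg1 : W (-1) = 0)
    (hWzero : ∀ s, W s = 0 → s = 1 ∨ s = -1)
    (φ φ' φ'' : ℝ → ℝ)
    (hφ : ∀ z, HasDerivAt φ (φ' z) z)
    (hφ' : ∀ z, HasDerivAt φ' (φ'' z) z)
    (hmono : StrictMono φ)
    (hODE : ∀ z, -φ'' z + deriv W (φ z) = 0)
    (htop : Tendsto φ atTop (nhds 1))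
    (hbot : Tendsto φ atBot (nhds (-1)))
    (hdecayW : Tendsto (fun z => W (φ z)) atBot (nhds 0))
    (hdecayφ' : Tendsto φ' atBot (nhds 0)) :
    ∫ z : ℝ, (W (φ z) + (1 / 2) * (φ' z) ^ 2)
      = ∫ s in (-1 : ℝ)..1, Real.sqrt (2 * W s) := by
  -- continuity facts
  have hWc : Continuous W := hW.continuous
  have hφc : Continuous φ := (Differentiable.continuous fun z => (hφ z).differentiableAt)
  have hφ'c : Continuous φ' := (Differentiable.continuous fun z => (hφ' z).differentiableAt)
  -- φ' is nonnegative
  have hφ'nn : ∀ z, 0 ≤ φ' z := by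
    intro z
    have hslope : Tendsto (slope φ z) (nhdsWithin z {z}ᶜ) (nhds (φ' z)) :=
      (hasDerivAt_iff_tendsto_slope).1 (hφ z)
    refine ge_of_tendsto hslope ?_
    filter_upwards [self_mem_nhdsWithin] with w hw
    rcases lt_or_gt_of_ne (show w ≠ z from hw) with h | h
    · have h2 : φ w < φ z := hmono h
      rw [slope_def_field]
      exact div_nonneg_iff.2 (Or.inr ⟨by linarith, by linarith⟩)
    · have h2 : φ z < φ w := hmono h
      rw [slope_def_field]
      exact div_nonneg (by linarith) (by linarith)
  -- energy conservation: E is constant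
  set E : ℝ → ℝ := fun z => (1/2) * (φ' z)^2 - W (φ z) with hE_def
  have hEderiv : ∀ z, HasDerivAt E 0 z := by
    intro z
    have h1 : HasDerivAt (fun z => (1/2) * (φ' z)^2) ((1/2) * (2 * φ' z ^ 1 * φ'' z)) z :=
      ((hφ' z).pow 2).const_mul (1/2)
    have h2 : HasDerivAt (fun z => W (φ z)) (deriv W (φ z) * φ' z) z :=
      ((hW.differentiable one_ne_zero (φ z)).hasDerivAt).comp z (hφ z)
    have h3 := h1.sub h2
    have hODEz := hODE z
    have : (1/2) * (2 * φ' z ^ 1 * φ'' z) - deriv W (φ z) * φ' z = 0 := by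
      have : φ'' z = deriv W (φ z) := by linarith
      rw [this]; ring
    rwa [this] at h3
  have hEconst : ∀ z, E z = E 0 := by
    intro z
    exact is_const_of_deriv_eq_zero (fun x => (hEderiv x).differentiableAt)
      (fun x => (hEderiv x).deriv) z 0
  have hEtendsto : Tendsto E atBot (nhds ((1/2) * 0^2 - 0)) := by
    exact (tendsto_const_nhds.mul (hdecayφ'.pow 2)).sub hdecayW
  have hE0 : E 0 = 0 := by
    have h1 : Tendsto E atBot (nhds (E 0)) := by
      rw [show E = fun _ => E 0 from funext hEconst]; exact tendsto_const_nhds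
    have := tendsto_nhds_unique h1 hEtendsto
    simpa using this
  -- equipartition
  have hequi : ∀ z, W (φ z) = (1/2) * (φ' z)^2 := by
    intro z
    have := hEconst z
    rw [hE0] at this
    simp only [hE_def] at this
    linarith
  -- integrand identity
  have hkey : ∀ z, W (φ z) + (1/2) * (φ' z)^2 = Real.sqrt (2 * W (φ z)) * φ' z := by
    intro z
    rw [hequi z]
    have : (2 : ℝ) * ((1/2) * (φ' z)^2) = (φ' z)^2 := by ring
    rw [this, Real.sqrt_sq_eq_abs, abs_of_nonneg (hφ'nn z)]
    ring
  -- φ maps into [-1, 1]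
  have hle1 : ∀ z, φ z ≤ 1 := fun z =>
    ge_of_tendsto htop (eventually_atTop.2 ⟨z, fun w hw => hmono.monotone hw⟩)
  have hgeneg1 : ∀ z, -1 ≤ φ z := fun z =>
    le_of_tendsto hbot (eventually_atBot.2 ⟨z, fun w hw => hmono.monotone hw⟩)
  -- the function under sqrt
  have hgc : Continuous (fun s => Real.sqrt (2 * W s)) :=
    Real.continuous_sqrt.comp (continuous_const.mul hWc)
  have hgnn : ∀ s, 0 ≤ Real.sqrt (2 * W s) := fun s => Real.sqrt_nonneg _
  -- interval substitution
  have hsub : ∀ t : ℝ, (∫ z in (-t)..t, (W (φ z) + (1/2) * (φ' z)^2))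
      = ∫ s in (φ (-t))..(φ t), Real.sqrt (2 * W s) := by
    intro t
    have := intervalIntegral.integral_comp_smul_deriv (a := -t) (b := t)
      (f := φ) (f' := φ') (g := fun s => Real.sqrt (2 * W s))
      (fun x _ => hφ x) hφ'c.continuousOn hgc
    simp only [smul_eq_mul, Function.comp] at this
    calc (∫ z in (-t)..t, (W (φ z) + (1/2) * (φ' z)^2))
        = ∫ z in (-t)..t, φ' z * Real.sqrt (2 * W (φ z)) := by
          apply intervalIntegral.integral_congr
          intro z _
          show W (φ z) + (1/2) * (φ' z)^2 = φ' z * Real.sqrt (2 * W (φ z))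
          rw [hkey z]; ring
      _ = _ := this
  -- bound on interval integrals
  have hIbound : ∀ t : ℝ, (∫ s in (φ (-t))..(φ t), Real.sqrt (2 * W s))
      ≤ ∫ s in (-1 : ℝ)..1, Real.sqrt (2 * W s) := by
    intro t
    rcases le_or_gt (φ (-t)) (φ t) with h | h
    · apply intervalIntegral.integral_mono_interval (hgeneg1 _) h (hle1 _)
      · filter_upwards with s using hgnn s
      · exact (hgc.intervalIntegrable _ _)
    · rw [intervalIntegral.integral_symm]
      have hnn : 0 ≤ ∫ s in (φ t)..(φ (-t)), Real.sqrt (2 * W s) :=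
        intervalIntegral.integral_nonneg h.le (fun s _ => hgnn s)
      have hnn2 : 0 ≤ ∫ s in (-1 : ℝ)..1, Real.sqrt (2 * W s) :=
        intervalIntegral.integral_nonneg (by norm_num) (fun s _ => hgnn s)
      have hle : (∫ s in (φ t)..(φ (-t)), Real.sqrt (2 * W s))
          ≤ ∫ s in (-1 : ℝ)..1, Real.sqrt (2 * W s) := by
        apply intervalIntegral.integral_mono_interval (hgeneg1 _) h.le (hle1 _)
        · filter_upwards with s using hgnn s
        · exact (hgc.intervalIntegrable _ _)
      linarith
  -- integrand is continuous and nonneg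
  have hfc : Continuous (fun z => W (φ z) + (1/2) * (φ' z)^2) :=
    (hWc.comp hφc).add (continuous_const.mul (hφ'c.pow 2))
  have hfnn : ∀ z, 0 ≤ W (φ z) + (1/2) * (φ' z)^2 := fun z => by
    have := hWnn (φ z)
    have := sq_nonneg (φ' z)
    positivity
  -- integrability over ℝ
  have hint : MeasureTheory.Integrable (fun z => W (φ z) + (1/2) * (φ' z)^2) := by
    apply MeasureTheory.integrable_of_intervalIntegral_norm_bounded
      (I := ∫ s in (-1 : ℝ)..1, Real.sqrt (2 * W s))
      (a := fun t : ℝ => -t) (b := fun t : ℝ => t) (l := atTop)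
    · intro t
      exact hfc.integrableOn_Ioc
    · exact tendsto_neg_atTop_atBot
    · exact tendsto_id
    · filter_upwards with t
      have : (∫ z in (-t)..t, ‖W (φ z) + (1/2) * (φ' z)^2‖)
          = ∫ z in (-t)..t, (W (φ z) + (1/2) * (φ' z)^2) := by
        apply intervalIntegral.integral_congr
        intro z _
        exact Real.norm_of_nonneg (hfnn z)
      rw [this, hsub t]
      exact hIbound t
  -- limit of interval integrals equals the whole integral
  have hlim1 : Tendsto (fun t : ℝ => ∫ z in (-t)..t, (W (φ z) + (1/2) * (φ' z)^2))
      atTop (nhds (∫ z : ℝ, (W (φ z) + (1/2) * (φ' z)^2))) :=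
    MeasureTheory.intervalIntegral_tendsto_integral hint tendsto_neg_atTop_atBot tendsto_id
  -- limit of interval integrals equals surface tension, via primitive
  set F : ℝ → ℝ := fun x => ∫ s in (-1 : ℝ)..x, Real.sqrt (2 * W s) with hF_def
  have hFc : Continuous F :=
    intervalIntegral.continuous_primitive (fun a b => hgc.intervalIntegrable a b) (-1)
  have hFsplit : ∀ t : ℝ, (∫ s in (φ (-t))..(φ t), Real.sqrt (2 * W s)) = F (φ t) - F (φ (-t)) := by
    intro t
    rw [hF_def]
    rw [← intervalIntegral.integral_interval_sub_left
      (hgc.intervalIntegrable (-1) (φ t)) (hgc.intervalIntegrable (-1) (φ (-t)))]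
  have hFneg1 : F (-1) = 0 := by simp [hF_def]
  have hlim2 : Tendsto (fun t : ℝ => ∫ z in (-t)..t, (W (φ z) + (1/2) * (φ' z)^2))
      atTop (nhds (∫ s in (-1 : ℝ)..1, Real.sqrt (2 * W s))) := by
    have h1 : Tendsto (fun t : ℝ => F (φ t)) atTop (nhds (F 1)) :=
      (hFc.continuousAt.tendsto).comp htop
    have h2 : Tendsto (fun t : ℝ => F (φ (-t))) atTop (nhds (F (-1))) :=
      ((hFc.continuousAt.tendsto).comp hbot).comp tendsto_neg_atTop_atBot
    have h3 := h1.sub h2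
    rw [hFneg1, sub_zero] at h3
    have heq : (fun t : ℝ => ∫ z in (-t)..t, (W (φ z) + (1/2) * (φ' z)^2))
        = fun t : ℝ => F (φ t) - F (φ (-t)) := by
      funext t
      rw [hsub t, hFsplit t]
    rw [heq]
    exact h3
  have hhalf : ∀ z : ℝ, W (φ z) + (1 / 2) * (φ' z) ^ 2 = W (φ z) + (1/2) * (φ' z)^2 := by
    intro z; norm_num
  exact tendsto_nhds_unique hlim1 hlim2
end
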